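/- Let $E$ be a finite directed graph, $K$ a field, and for $e \in E^1$ define the right transduction $\tilde\delta_e \colon P_K((E)) \to P_K((E))$ by $\tilde\delta_e(\sum_\alpha \lambda_\alpha \alpha) = \sum_{\alpha : s(\alpha) = r(e)} \lambda_{e\alpha}\, \alpha$, and define $\tau_e \colon P_K((E)) \to P_K((E))$ as the composite of the augmentation map to $\prod_{v} K v$, the linear map sending $s(e) \mapsto r(e)$ and $v \mapsto 0$ for $v \ne s(e)$, and the inclusion back into $P_K((E))$. Then $\tilde\delta_e$ is a right $\tau_e$-derivation: $\tilde\delta_e(rs) = \tilde\delta_e(r)s + \tau_e(r)\tilde\delta_e(s)$ for all $r, s \in P_K((E))$. -/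
import Mathlib


/-- Coefficient functions of formal power series on the paths of a quiver. -/
abbrev SeriesCoef (V : Type*) [Quiver V] (K : Type*) := ∀ u w : V, Quiver.Path u w → K

/-- Auxiliary convolution: `conv a b γ = ∑_{γ = μ·ν} a μ * b ν`. -/
def conv {V K : Type*} [Quiver V] [Semiring K] (a : SeriesCoef V K) :
    ∀ {u w : V}, (∀ p : V, Quiver.Path p w → K) → Quiver.Path u w → K
  | u, _, b, Quiver.Path.nil => a u u Quiver.Path.nil * b u Quiver.Path.nil
  | u, w, b, Quiver.Path.cons δ e =>
      a u w (δ.cons e) * b w Quiver.Path.nil +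
        conv a (fun p ν => b p (ν.cons e)) δ

/-- The convolution product on `P_K((E))`. -/
def pmul {V K : Type*} [Quiver V] [Semiring K] (a b : SeriesCoef V K) : SeriesCoef V K :=
  fun _ w γ => conv a (fun p ν => b p w ν) γ

/-- The right transduction `δ̃ₑ` : `δ̃ₑ(∑ λ_α α) = ∑_{s(α) = r(e)} λ_{eα} α`. -/
noncomputable def transduction {V K : Type*} [Quiver V] [Semiring K] {x y : V} (e : x ⟶ y)
    (a : SeriesCoef V K) : SeriesCoef V K := fun u w γ =>
  letI := Classical.propDecidable (u = y)
  if h : u = y then a x w ((Quiver.Path.nil.cons e).comp (h ▸ γ)) else 0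

/-- The twisting endomorphism `τₑ`: the composite of the augmentation map, the linear map
sending `s(e) ↦ r(e)` and every other vertex to `0`, and the inclusion back. -/
noncomputable def tauMap {V K : Type*} [Quiver V] [Semiring K] {x y : V} (e : x ⟶ y)
    (a : SeriesCoef V K) : SeriesCoef V K := fun u w γ =>
  letI := Classical.propDecidable (u = y ∧ w = y ∧ γ.length = 0)
  if u = y ∧ w = y ∧ γ.length = 0 then a x x Quiver.Path.nil else 0

lemma conv_zero_left {V K : Type*} [Quiver V] [Semiring K] (a : SeriesCoef V K)
    {u : V} (ha : ∀ (w' : V) (μ : Quiver.Path u w'), a u w' μ = 0) :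
    ∀ {w : V} (γ : Quiver.Path u w) (b : ∀ p : V, Quiver.Path p w → K),
      conv a b γ = 0 := by
  intro w γ
  induction γ with
  | nil => intro b; simp [conv, ha]
  | cons δ f ih => intro b; simp [conv, ha, ih]

lemma conv_tauMap {V K : Type*} [Quiver V] [Semiring K] {x y : V} (e : x ⟶ y)
    (r : SeriesCoef V K) :
    ∀ {w : V} (γ : Quiver.Path y w) (b : ∀ p : V, Quiver.Path p w → K),
      conv (tauMap e r) b γ = r x x Quiver.Path.nil * b y γ := by
  intro w γ
  induction γ with
  | nil => intro b; simp [conv, tauMap]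
  | cons δ f ih => intro b; simp [conv, tauMap, ih]

lemma conv_key {V K : Type*} [Quiver V] [Semiring K] {x y : V} (e : x ⟶ y)
    (r : SeriesCoef V K) :
    ∀ {w : V} (γ : Quiver.Path y w) (b : ∀ p : V, Quiver.Path p w → K),
      conv r b ((Quiver.Path.nil.cons e).comp γ) =
        conv (transduction e r) b γ +
          r x x Quiver.Path.nil * b x ((Quiver.Path.nil.cons e).comp γ) := by
  intro w γ
  induction γ with
  | nil => intro b; simp [conv, transduction]
  | cons δ f ih =>
    intro b
    show conv r b (((Quiver.Path.nil.cons e).comp δ).cons f) = _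
    rw [conv, ih (fun p ν => b p (ν.cons f))]
    show _ = conv (transduction e r) b (δ.cons f) + _
    rw [conv]
    have ht : transduction e r y _ (δ.cons f) = r x _ (((Quiver.Path.nil.cons e).comp δ).cons f) := by
      simp [transduction]
    rw [ht, Quiver.Path.comp_cons, add_assoc]

/-- the right transduction `δ̃ₑ` is a right `τₑ`-derivation on `P_K((E))`:
`δ̃ₑ(rs) = δ̃ₑ(r)s + τₑ(r)δ̃ₑ(s)`. -/
theorem stmt13 {V K : Type*} [Quiver V] [Fintype V] [∀ u w : V, Fintype (u ⟶ w)] [Field K]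
    {x y : V} (e : x ⟶ y) (r s : SeriesCoef V K) :
    transduction e (pmul r s) =
      pmul (transduction e r) s + pmul (tauMap e r) (transduction e s) := by
  funext u w γ
  by_cases h : u = y
  · subst h
    have hl : transduction e (pmul r s) u w γ = pmul r s x w ((Quiver.Path.nil.cons e).comp γ) := by
      simp [transduction]
    rw [hl]
    show conv r (fun p ν => s p w ν) ((Quiver.Path.nil.cons e).comp γ) = _
    rw [conv_key e r γ (fun p ν => s p w ν)]
    show _ = pmul (transduction e r) s u w γ + pmul (tauMap e r) (transduction e s) u w γ
    rw [pmul, pmul, conv_tauMap e r γ (fun p ν => transduction e s p w ν)]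
    have hs : transduction e s u w γ = s x w ((Quiver.Path.nil.cons e).comp γ) := by
      simp [transduction]
    rw [hs]
  · have hl : transduction e (pmul r s) u w γ = 0 := by simp [transduction, h]
    have h1 : pmul (transduction e r) s u w γ = 0 := by
      apply conv_zero_left
      intro w' μ; simp [transduction, h]
    have h2 : pmul (tauMap e r) (transduction e s) u w γ = 0 := by
      apply conv_zero_left
      intro w' μ; simp [tauMap, h]
    show transduction e (pmul r s) u w γ = pmul (transduction e r) s u w γ + pmul (tauMap e r) (transduction e s) u w γ
    rw [hl, h1, h2, add_zero]
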